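/- arXiv:2505.19497 — 3 statements merged into one kernel-verified Lean document; each statement's English description precedes it below -/
import Mathlib

section
/- Let E be a finite-dimensional real inner product space, let K ⊆ E be a nonempty closed convex set with metric projection P_K : E → K, and let m be the dimension of the direction space of the affine span of K. If C ⊆ K is a Borel set with positive m-dimensional Hausdorff measure, then the preimage P_K⁻¹(C) = {z ∈ E : P_K(z) ∈ C} has positive Lebesgue (Haar) measure in E. -/
open MeasureTheory Set RealInnerProductSpace

/-- Let `K` be a nonempty closed convex subset of a finite-dimensional real inner product
space `E`, with metric projection `P`, and let `m` be the dimension of the direction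
space of the affine span of `K`. If `C ⊆ K` is a Borel set with positive `m`-dimensional
Hausdorff measure, then the preimage `{z | P z ∈ C}` has positive Lebesgue (Haar) measure
in `E`. -/
theorem projection_preimage_pos_measure {E : Type*}
    [NormedAddCommGroup E] [InnerProductSpace ℝ E] [FiniteDimensional ℝ E]
    [MeasurableSpace E] [BorelSpace E]
    (K : Set E) (hKne : K.Nonempty) (hKcl : IsClosed K) (hKco : Convex ℝ K)
    (P : E → E) (hPmem : ∀ a, P a ∈ K)
    (hPnear : ∀ a, ∀ y ∈ K, dist a (P a) ≤ dist a y)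
    (C : Set E) (hCK : C ⊆ K) (hCmeas : MeasurableSet C)
    (hCpos : 0 < μH[(Module.finrank ℝ (affineSpan ℝ K).direction : ℝ)] C) :
    0 < (volume : Measure E) {z : E | P z ∈ C} := by
  classical
  obtain ⟨p, hpK⟩ := hKne
  haveI : Nonempty K := ⟨⟨p, hpK⟩⟩
  set V : Submodule ℝ E := (affineSpan ℝ K).direction with hVdef
  have hsub : ∀ y ∈ K, ∀ c ∈ K, y - c ∈ V := by
    intro y hy c hc
    simpa using AffineSubspace.vsub_mem_direction
      (subset_affineSpan ℝ K hy) (subset_affineSpan ℝ K hc)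
  -- Key geometric fact: P (c + w) = c for c ∈ K, w ∈ Vᗮ.
  have key : ∀ c ∈ K, ∀ w ∈ Vᗮ, P (c + w) = c := by
    intro c hc w hw
    set z := c + w with hz
    have hiInf : ‖z - P z‖ = ⨅ y : K, ‖z - y‖ := by
      refine le_antisymm (le_ciInf fun y => ?_) ?_
      · simpa [dist_eq_norm] using hPnear z y y.2
      · exact ciInf_le ⟨0, by rintro x ⟨y, rfl⟩; exact norm_nonneg _⟩ (⟨P z, hPmem z⟩ : K)
    have hPz : ∀ y ∈ K, (inner ℝ (z - P z) (y - P z) : ℝ) ≤ 0 :=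
      (norm_eq_iInf_iff_real_inner_le_zero hKco (hPmem z)).mp hiInf
    have h1 : (inner ℝ (z - P z) (c - P z) : ℝ) ≤ 0 := hPz c hc
    have h2 : (inner ℝ (z - c) (c - P z) : ℝ) = 0 := by
      have hz' : z - c = w := by rw [hz]; abel
      have hmem : c - P z ∈ V := hsub c hc (P z) (hPmem z)
      rw [hz']
      exact real_inner_comm w _ ▸ (Submodule.mem_orthogonal V w).mp hw _ hmem
    have hsq : ‖c - P z‖ ^ 2 ≤ 0 := by
      have hexp : (c - P z) = (z - P z) - (z - c) := by abel
      calc ‖c - P z‖ ^ 2 = (inner ℝ (c - P z) (c - P z) : ℝ) := (real_inner_self_eq_norm_sq _).symm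
        _ = (inner ℝ (z - P z) (c - P z) : ℝ) - (inner ℝ (z - c) (c - P z) : ℝ) := by rw [hexp, inner_sub_left]
        _ ≤ 0 := by rw [h2]; simpa using h1
    have : c - P z = 0 := by
      have := norm_nonneg (c - P z)
      have hn : ‖c - P z‖ = 0 := le_antisymm (by nlinarith) this
      simpa [norm_eq_zero] using hn
    have := sub_eq_zero.mp this
    exact this.symm
  -- Setup the product decomposition.
  have hcompl : IsCompl V Vᗮ := Submodule.isCompl_orthogonal_of_hasOrthogonalProjection
  set e : (V × Vᗮ) ≃ₗ[ℝ] E := Submodule.prodEquivOfIsCompl V Vᗮ hcompl with hedef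
  set D : Set V := (fun v : V => p + (v : E)) ⁻¹' C with hDdef
  have hDmeas : MeasurableSet D :=
    hCmeas.preimage ((continuous_const.add continuous_subtype_val).measurable)
  -- The set we include into the preimage.
  set A : Set (V × Vᗮ) := D ×ˢ (univ : Set Vᗮ) with hAdef
  have hincl : (p + ·) '' (e '' A) ⊆ {z : E | P z ∈ C} := by
    rintro _ ⟨_, ⟨⟨v, w⟩, ⟨hv, -⟩, rfl⟩, rfl⟩
    have hvC : p + (v : E) ∈ C := hv
    have heval : e (v, w) = (v : E) + w := rfl
    have : P (p + e (v, w)) = p + (v : E) := by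
      rw [heval, ← add_assoc]
      exact key _ (hCK hvC) w w.2
    simpa [Set.mem_setOf_eq, this] using hvC
  -- Measures
  set μV : Measure V := μH[(Module.finrank ℝ V : ℝ)] with hμV
  set μW : Measure Vᗮ := μH[(Module.finrank ℝ Vᗮ : ℝ)] with hμW
  haveI : Measure.IsAddHaarMeasure μV := MeasureTheory.isAddHaarMeasure_hausdorffMeasure
  haveI : Measure.IsAddHaarMeasure μW := MeasureTheory.isAddHaarMeasure_hausdorffMeasure
  set ν : Measure E := (μV.prod μW).map e with hν
  haveI : Measure.IsAddHaarMeasure ν := MeasureTheory.Measure.MapLinearEquiv.isAddHaarMeasure _ e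
  -- μV D is positive
  have hμVD : 0 < μV D := by
    have hiso : Isometry (fun v : V => (v : E)) := isometry_subtype_coe
    have himg : μH[(Module.finrank ℝ V : ℝ)] ((fun v : V => (v : E)) '' D) = μV D :=
      hiso.hausdorffMeasure_image (Or.inl (by positivity)) D
    have hset : (fun v : V => (v : E)) '' D = (fun c => -p + c) '' C := by
      ext x
      constructor
      · rintro ⟨v, hv, rfl⟩
        exact ⟨p + (v : E), hv, neg_add_cancel_left p v⟩
      · rintro ⟨c, hc, rfl⟩
        refine ⟨⟨c - p, hsub c (hCK hc) p hpK⟩, ?_, (sub_eq_neg_add c p)⟩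
        show p + (c - p) ∈ C
        simpa using hc
    have htrans : μH[(Module.finrank ℝ V : ℝ)] ((fun c => -p + c) '' C)
        = μH[(Module.finrank ℝ V : ℝ)] C := by
      have := (IsometryEquiv.addLeft (-p)).hausdorffMeasure_image
        ((Module.finrank ℝ V : ℝ)) C
      simpa using this
    rw [← himg, hset, htrans]
    exact hCpos
  -- ν of the image set is positive
  have hνA : 0 < ν (e '' A) := by
    have hpre : (⇑e) ⁻¹' (e '' A) = A := Set.preimage_image_eq A e.injective
    have hmeasA : MeasurableSet A := hDmeas.prod MeasurableSet.univ
    have hmeasimg : MeasurableSet (e '' A) := by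
      have : e '' A = (⇑e.symm) ⁻¹' A := by
        ext x; simp [LinearEquiv.image_eq_preimage_symm]
      rw [this]
      exact hmeasA.preimage (e.symm.toContinuousLinearEquiv.continuous.measurable)
    have hemeas : Measurable (⇑e) := e.toContinuousLinearEquiv.continuous.measurable
    have hmap : ν (e '' A) = (μV.prod μW) A := by
      rw [hν, Measure.map_apply hemeas hmeasimg, hpre]
    rw [hmap, hAdef, Measure.prod_prod]
    have hWuniv : 0 < μW (univ : Set Vᗮ) :=
      isOpen_univ.measure_pos μW ⟨0, trivial⟩
    exact ENNReal.mul_pos hμVD.ne' hWuniv.ne'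
  -- volume of the preimage is positive
  by_contra hcon
  push_neg at hcon
  have hvol0 : (volume : Measure E) {z : E | P z ∈ C} = 0 := le_antisymm hcon (zero_le)
  have hsubvol : (volume : Measure E) ((p + ·) '' (e '' A)) = 0 :=
    measure_mono_null hincl hvol0
  have hac : ν ≪ (volume : Measure E) :=
    Measure.absolutelyContinuous_isAddHaarMeasure ν volume
  have hν0 : ν ((p + ·) '' (e '' A)) = 0 := hac hsubvol
  have himgpre : (p + ·) '' (e '' A) = (fun z => -p + z) ⁻¹' (e '' A) := by
    ext z
    constructor
    · rintro ⟨x, hx, rfl⟩; simpa using hx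
    · intro hz; exact ⟨-p + z, hz, add_neg_cancel_left p z⟩
  rw [himgpre, measure_preimage_add] at hν0
  exact hνA.ne' hν0
end

section
/- Let G be a finite simple graph with vertex set V, let M be a real number with M > 1, and define H(x) = −∑_{i ∈ V} x i + M · ∑_{{i,j} ∈ E(G)} x i · x j for x : V → ℝ. If x takes values in {0, 1} and minimizes H among all {0,1}-valued assignments, then the set {i ∈ V : x i = 1} is an independent set of G (no two of its vertices are adjacent). -/
open Finset

/-- The MIS QUBO objective `H(x) = -∑_i x i + M ∑_{{i,j} ∈ E(G)} x i * x j`. -/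
noncomputable def misObj {V : Type*} [Fintype V] (G : SimpleGraph V)
    [DecidableRel G.Adj] (M : ℝ) (x : V → ℝ) : ℝ :=
  -∑ i, x i + M * ∑ e ∈ G.edgeFinset,
    Sym2.lift ⟨fun i j => x i * x j, fun i j => by ring⟩ e

/-- If `M > 1` and a `{0,1}`-valued `x` minimizes the MIS QUBO objective among all
`{0,1}`-valued assignments, then `{i | x i = 1}` is an independent set of `G`: no two of
its vertices are adjacent. -/
theorem mis_qubo_minimizer_is_independent {V : Type*} [Fintype V] (G : SimpleGraph V)
    [DecidableRel G.Adj] (M : ℝ) (hM : 1 < M) (x : V → ℝ)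
    (hx : ∀ i, x i = 0 ∨ x i = 1)
    (hmin : ∀ y : V → ℝ, (∀ i, y i = 0 ∨ y i = 1) → misObj G M x ≤ misObj G M y) :
    {i | x i = 1}.Pairwise fun i j => ¬G.Adj i j := by
  classical
  intro i hi j hj hij hadj
  simp only [Set.mem_setOf_eq] at hi hj
  set y : V → ℝ := Function.update x j 0 with hydef
  have hyj : y j = 0 := by simp [hydef]
  have hyk : ∀ k, k ≠ j → y k = x k := by
    intro k hk; simp [hydef, Function.update_of_ne hk]
  have hy01 : ∀ k, y k = 0 ∨ y k = 1 := by
    intro k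
    by_cases h : k = j
    · left; simp [h, hyj]
    · rw [hyk k h]; exact hx k
  have hxnn : ∀ k, 0 ≤ x k := by
    intro k; rcases hx k with h | h <;> rw [h] <;> norm_num
  have hynn : ∀ k, 0 ≤ y k := by
    intro k; rcases hy01 k with h | h <;> rw [h] <;> norm_num
  have hyle : ∀ k, y k ≤ x k := by
    intro k
    by_cases h : k = j
    · subst h; rw [hyj, hj]; norm_num
    · rw [hyk k h]
  -- vertex sum
  have hsum : ∑ k, y k = (∑ k, x k) - 1 := by
    have h1 : ∑ k, x k = x j + ∑ k ∈ Finset.univ.erase j, x k :=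
      (Finset.add_sum_erase _ x (Finset.mem_univ j)).symm
    have h2 : ∑ k, y k = y j + ∑ k ∈ Finset.univ.erase j, y k :=
      (Finset.add_sum_erase _ y (Finset.mem_univ j)).symm
    have h3 : ∑ k ∈ Finset.univ.erase j, y k = ∑ k ∈ Finset.univ.erase j, x k := by
      apply Finset.sum_congr rfl
      intro k hk
      exact hyk k (Finset.ne_of_mem_erase hk)
    rw [h2, h3, hyj, h1, hj]; ring
  -- edge sums
  set Tx : Sym2 V → ℝ := Sym2.lift ⟨fun a b => x a * x b, fun a b => by ring⟩ with hTx
  set Ty : Sym2 V → ℝ := Sym2.lift ⟨fun a b => y a * y b, fun a b => by ring⟩ with hTy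
  have hTle : ∀ e, Ty e ≤ Tx e := by
    intro e
    induction e using Sym2.ind with
    | _ a b =>
      simp only [hTx, hTy, Sym2.lift_mk]
      exact mul_le_mul (hyle a) (hyle b) (hynn b) (hxnn a)
  have he0 : s(i, j) ∈ G.edgeFinset := by
    rw [SimpleGraph.mem_edgeFinset]; exact hadj
  have hTx0 : Tx s(i, j) = 1 := by simp [hTx, hi, hj]
  have hTy0 : Ty s(i, j) = 0 := by simp [hTy, hyj]
  have hedge : ∑ e ∈ G.edgeFinset, Ty e ≤ (∑ e ∈ G.edgeFinset, Tx e) - 1 := by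
    have h1 : ∑ e ∈ G.edgeFinset, Tx e
        = Tx s(i, j) + ∑ e ∈ G.edgeFinset.erase s(i, j), Tx e :=
      (Finset.add_sum_erase _ Tx he0).symm
    have h2 : ∑ e ∈ G.edgeFinset, Ty e
        = Ty s(i, j) + ∑ e ∈ G.edgeFinset.erase s(i, j), Ty e :=
      (Finset.add_sum_erase _ Ty he0).symm
    have h3 : ∑ e ∈ G.edgeFinset.erase s(i, j), Ty e
        ≤ ∑ e ∈ G.edgeFinset.erase s(i, j), Tx e :=
      Finset.sum_le_sum fun e _ => hTle e
    rw [h1, h2, hTx0, hTy0]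
    linarith
  have hlt : misObj G M y < misObj G M x := by
    have hM0 : 0 < M := lt_trans one_pos hM
    have : M * ∑ e ∈ G.edgeFinset, Ty e ≤ M * ((∑ e ∈ G.edgeFinset, Tx e) - 1) :=
      mul_le_mul_of_nonneg_left hedge (le_of_lt hM0)
    simp only [misObj, ← hTx, ← hTy]
    rw [hsum]
    nlinarith
  exact absurd (hmin y hy01) (not_le.mpr hlt)
end

section
/- Let G be a finite simple graph with vertex set V, let M be a real number with M > 1, and define H(x) = −∑_{i ∈ V} x i + M · ∑_{{i,j} ∈ E(G)} x i · x j for x : V → ℝ. Then the minimum of H over all x : V → {0, 1} equals −α(G), the negative of the independence number of G; moreover, for every minimizer x, the set {i ∈ V : x i = 1} is an independent set of G of maximum cardinality α(G). -/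
open Finset

open Classical in
/-- Edges of `G` with both endpoints in `S`. -/
noncomputable def edgesIn {V : Type*} [Fintype V] (G : SimpleGraph V)
    [DecidableRel G.Adj] (S : Finset V) : Finset (Sym2 V) :=
  G.edgeFinset.filter (fun e => ∀ v ∈ e, v ∈ S)

open Classical in
/-- Support of a boolean vector. -/
noncomputable def suppF {V : Type*} [Fintype V] (x : V → ℝ) : Finset V :=
  Finset.univ.filter (fun i => x i = 1)

lemma mem_edgesIn {V : Type*} [Fintype V] (G : SimpleGraph V)
    [DecidableRel G.Adj] (S : Finset V) (e : Sym2 V) :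
    e ∈ edgesIn G S ↔ e ∈ G.edgeFinset ∧ ∀ v ∈ e, v ∈ S := by
  classical
  simp [edgesIn]

lemma indep_of_edgesIn_empty {V : Type*} [Fintype V] (G : SimpleGraph V)
    [DecidableRel G.Adj] (S : Finset V) (h : edgesIn G S = ∅) :
    (↑S : Set V).Pairwise fun i j => ¬G.Adj i j := by
  intro i hi j hj hne hadj
  have : s(i, j) ∈ edgesIn G S := by
    rw [mem_edgesIn]
    refine ⟨by simp [SimpleGraph.mem_edgeFinset, hadj], ?_⟩
    intro v hv
    rw [Sym2.mem_iff] at hv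
    rcases hv with rfl | rfl <;> assumption
  simp [h] at this

lemma card_le_alpha_add {V : Type*} [Fintype V] (G : SimpleGraph V) [DecidableRel G.Adj]
    (α : ℕ) (hub : ∀ s : Set V, (s.Pairwise fun i j => ¬G.Adj i j) → s.ncard ≤ α) :
    ∀ S : Finset V, S.card ≤ α + (edgesIn G S).card := by
  classical
  suffices h : ∀ n : ℕ, ∀ S : Finset V, (edgesIn G S).card = n →
      S.card ≤ α + (edgesIn G S).card by
    intro S; exact h _ S rfl
  intro n
  induction n using Nat.strong_induction_on with
  | _ n ih =>
    intro S hn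
    by_cases h0 : (edgesIn G S).card = 0
    · have hemp : edgesIn G S = ∅ := Finset.card_eq_zero.mp h0
      have hind := indep_of_edgesIn_empty G S hemp
      have := hub (↑S) hind
      rw [Set.ncard_coe_finset] at this
      omega
    · obtain ⟨e, he⟩ := Finset.card_ne_zero.mp h0
      induction e using Sym2.ind with
      | _ i j =>
        rw [mem_edgesIn] at he
        obtain ⟨heE, hvs⟩ := he
        have hadj : G.Adj i j := by
          rwa [SimpleGraph.mem_edgeFinset, SimpleGraph.mem_edgeSet] at heE
        have hi : i ∈ S := hvs i (by simp)
        have hj : j ∈ S := hvs j (by simp)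
        set S' := S.erase i with hS'
        have hsub : edgesIn G S' ⊆ (edgesIn G S).erase s(i, j) := by
          intro e' he'
          rw [mem_edgesIn] at he'
          rw [Finset.mem_erase, mem_edgesIn]
          refine ⟨?_, he'.1, fun v hv => Finset.mem_of_mem_erase (he'.2 v hv)⟩
          intro heq
          have : i ∈ S' := he'.2 i (by simp [heq])
          exact Finset.notMem_erase i S this
        have hmem : s(i, j) ∈ edgesIn G S := by
          rw [mem_edgesIn]
          exact ⟨heE, hvs⟩
        have hcard' : (edgesIn G S').card < (edgesIn G S).card := by
          calc (edgesIn G S').card ≤ ((edgesIn G S).erase s(i, j)).card :=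
                Finset.card_le_card hsub
            _ = (edgesIn G S).card - 1 := Finset.card_erase_of_mem hmem
            _ < (edgesIn G S).card := by
                have := Finset.card_pos.mpr ⟨_, hmem⟩; omega
        have := ih _ (hn ▸ hcard') S' rfl
        have hcS : S'.card = S.card - 1 := Finset.card_erase_of_mem hi
        have hSpos : 0 < S.card := Finset.card_pos.mpr ⟨_, hi⟩
        omega

lemma mem_suppF {V : Type*} [Fintype V] (x : V → ℝ) (i : V) :
    i ∈ suppF x ↔ x i = 1 := by
  classical
  simp [suppF]

lemma misObj_eq {V : Type*} [Fintype V] (G : SimpleGraph V) [DecidableRel G.Adj]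
    (M : ℝ) (x : V → ℝ) (hx : ∀ i, x i = 0 ∨ x i = 1) :
    misObj G M x = -((suppF x).card : ℝ) + M * ((edgesIn G (suppF x)).card : ℝ) := by
  classical
  have h1 : ∑ i, x i = ((suppF x).card : ℝ) := by
    have : ∑ i, x i = ∑ i, (if x i = 1 then (1 : ℝ) else 0) := by
      refine Finset.sum_congr rfl fun i _ => ?_
      rcases hx i with h | h <;> simp [h]
    rw [this, Finset.sum_boole, suppF]
  have h2 : ∑ e ∈ G.edgeFinset,
      Sym2.lift ⟨fun i j => x i * x j, fun i j => by ring⟩ e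
      = ((edgesIn G (suppF x)).card : ℝ) := by
    have : ∑ e ∈ G.edgeFinset,
        Sym2.lift ⟨fun i j => x i * x j, fun i j => by ring⟩ e
        = ∑ e ∈ G.edgeFinset, (if ∀ v ∈ e, v ∈ suppF x then (1 : ℝ) else 0) := by
      refine Finset.sum_congr rfl fun e he => ?_
      induction e using Sym2.ind with
      | _ i j =>
        simp only [Sym2.lift_mk]
        have hcond : (∀ v ∈ s(i, j), v ∈ suppF x) ↔ (x i = 1 ∧ x j = 1) := by
          constructor
          · intro h
            exact ⟨(mem_suppF x i).mp (h i (by simp)), (mem_suppF x j).mp (h j (by simp))⟩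
          · rintro ⟨h1, h2⟩ v hv
            rw [Sym2.mem_iff] at hv
            rcases hv with rfl | rfl <;> simp [mem_suppF, h1, h2]
        simp only [hcond]
        rcases hx i with h | h <;> rcases hx j with h' | h' <;> simp [h, h']
    rw [this, Finset.sum_boole]
    congr 1
  rw [misObj, h1, h2]

lemma misObj_ge {V : Type*} [Fintype V] (G : SimpleGraph V) [DecidableRel G.Adj]
    (M : ℝ) (hM : 1 < M) (α : ℕ)
    (hub : ∀ s : Set V, (s.Pairwise fun i j => ¬G.Adj i j) → s.ncard ≤ α)
    (x : V → ℝ) (hx : ∀ i, x i = 0 ∨ x i = 1) :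
    -(α : ℝ) ≤ misObj G M x := by
  rw [misObj_eq G M x hx]
  have h := card_le_alpha_add G α hub (suppF x)
  have hc : ((suppF x).card : ℝ) ≤ (α : ℝ) + ((edgesIn G (suppF x)).card : ℝ) := by
    exact_mod_cast h
  have hM0 : (0 : ℝ) ≤ (M - 1) * ((edgesIn G (suppF x)).card : ℝ) :=
    mul_nonneg (by linarith) (Nat.cast_nonneg _)
  nlinarith

/-- Let `M > 1` and let `α` be the independence number of `G` (the greatest cardinality of
an independent set). Then the minimum of the MIS QUBO objective over `{0,1}`-valued
assignments equals `-α`, and every `{0,1}`-valued minimizer `x` has `{i | x i = 1}` an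
independent set of maximum cardinality `α`. -/
theorem mis_qubo_min_eq_neg_indepNum {V : Type*} [Fintype V] (G : SimpleGraph V)
    [DecidableRel G.Adj] (M : ℝ) (hM : 1 < M) (α : ℕ)
    (hα : IsGreatest
      {k : ℕ | ∃ s : Set V, (s.Pairwise fun i j => ¬G.Adj i j) ∧ s.ncard = k} α) :
    IsLeast {r : ℝ | ∃ x : V → ℝ, (∀ i, x i = 0 ∨ x i = 1) ∧ r = misObj G M x}
        (-(α : ℝ)) ∧
      ∀ x : V → ℝ, (∀ i, x i = 0 ∨ x i = 1) →
        (∀ y : V → ℝ, (∀ i, y i = 0 ∨ y i = 1) → misObj G M x ≤ misObj G M y) →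
        ({i | x i = 1}.Pairwise fun i j => ¬G.Adj i j) ∧ {i | x i = 1}.ncard = α := by
  classical
  have hub : ∀ s : Set V, (s.Pairwise fun i j => ¬G.Adj i j) → s.ncard ≤ α := by
    intro s hs
    exact hα.2 ⟨s, hs, rfl⟩
  obtain ⟨s₀, hs₀, hcard₀⟩ := hα.1
  -- witness assignment
  set y₀ : V → ℝ := fun i => if i ∈ s₀ then 1 else 0 with hy₀
  have hy₀b : ∀ i, y₀ i = 0 ∨ y₀ i = 1 := by
    intro i; by_cases h : i ∈ s₀ <;> simp [hy₀, h]
  have hsupp₀ : suppF y₀ = s₀.toFinset := by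
    ext i
    rw [mem_suppF]
    by_cases h : i ∈ s₀ <;> simp [hy₀, h]
  have hedges₀ : edgesIn G (suppF y₀) = ∅ := by
    rw [Finset.eq_empty_iff_forall_notMem]
    intro e he
    induction e using Sym2.ind with
    | _ i j =>
      rw [mem_edgesIn] at he
      obtain ⟨heE, hvs⟩ := he
      have hadj : G.Adj i j := by
        rwa [SimpleGraph.mem_edgeFinset, SimpleGraph.mem_edgeSet] at heE
      have hi : i ∈ s₀ := by
        have := hvs i (by simp); rwa [hsupp₀, Set.mem_toFinset] at this
      have hj : j ∈ s₀ := by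
        have := hvs j (by simp); rwa [hsupp₀, Set.mem_toFinset] at this
      exact hs₀ hi hj hadj.ne hadj
  have hval₀ : misObj G M y₀ = -(α : ℝ) := by
    rw [misObj_eq G M y₀ hy₀b, hedges₀, hsupp₀]
    have : s₀.toFinset.card = α := by
      rw [← hcard₀, Set.ncard_eq_toFinset_card']
    simp [this]
  constructor
  · constructor
    · exact ⟨y₀, hy₀b, hval₀.symm⟩
    · rintro r ⟨x, hx, rfl⟩
      exact misObj_ge G M hM α hub x hx
  · intro x hx hmin
    have hle : misObj G M x ≤ -(α : ℝ) := hval₀ ▸ hmin y₀ hy₀b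
    have hge : -(α : ℝ) ≤ misObj G M x := misObj_ge G M hM α hub x hx
    have heq : misObj G M x = -(α : ℝ) := le_antisymm hle hge
    rw [misObj_eq G M x hx] at heq
    set S := suppF x with hS
    set eS := (edgesIn G S).card with heS
    have hcard_le : S.card ≤ α + eS := card_le_alpha_add G α hub S
    have heS0 : eS = 0 := by
      by_contra h
      have h1 : (1 : ℝ) ≤ (eS : ℝ) := by exact_mod_cast Nat.one_le_iff_ne_zero.mpr h
      have hc : ((S.card : ℝ)) ≤ (α : ℝ) + (eS : ℝ) := by exact_mod_cast hcard_le
      nlinarith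
    have hemp : edgesIn G S = ∅ := Finset.card_eq_zero.mp heS0
    have hindep : (↑S : Set V).Pairwise fun i j => ¬G.Adj i j :=
      indep_of_edgesIn_empty G S hemp
    have hSset : {i | x i = 1} = (↑S : Set V) := by
      ext i
      simp [hS, mem_suppF]
    have hScard : S.card = α := by
      have : -(S.card : ℝ) + M * (eS : ℝ) = -(α : ℝ) := heq
      rw [heS0] at this
      simp at this
      exact_mod_cast this
    refine ⟨hSset ▸ hindep, ?_⟩
    rw [hSset, Set.ncard_coe_finset, hScard]
end
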